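/- Assume P is eventually positive and has SRLP with ratio-limit kernel H, and suppose c, C : G → ℝ satisfy 0 < c(x) ≤ H(x,y) ≤ C(x) for all x, y ∈ G. Let φ : G → ℕ be a bijection and define d : G × G → ℝ by d(y,z) = ∑_{x ∈ G} |H(x,y) − H(x,z)|/(C(x)·2^{φ(x)}). Then: (i) the series defining d(y,z) is summable for all y, z; (ii) d is symmetric and satisfies the triangle inequality d(y,w) ≤ d(y,z) + d(z,w); and (iii) d(y,z) = 0 if and only if y⁻¹z ∈ R_μ, so d descends to a metric on the coset space G/R_μ. -/

import Mathlib

open Filter Topology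
open scoped Classical

/-- The ratio-limit radical of the ratio-limit kernel H. -/
def ratioLimitRadical {G : Type*} [Group G] (H : G → G → ℝ) : Set G :=
  {y : G | ∀ x : G, H x y = H x 1}

/-- the metric defining the ratio-limit space: summability, symmetry,
triangle inequality, and vanishing exactly on cosets of the ratio-limit radical. -/
theorem stmt12 {G : Type*} [Group G] [Countable G]
(μ : G → ℝ) (hμnn : ∀ g : G, 0 ≤ μ g)
    (hμfin : (Function.support μ).Finite)
    (hμgen : Subsemigroup.closure (Function.support μ) = ⊤)
    (hμsum : ∑ᶠ g : G, μ g = 1)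
    (ν : ℕ → G → ℝ)
    (hν0 : ∀ x : G, ν 0 x = if x = 1 then 1 else 0)
    (hνs : ∀ (m : ℕ) (x : G), ν (m + 1) x = ∑ᶠ g : G, ν m g * μ (g⁻¹ * x))
(hev : ∀ y : G, ∃ m₀ : ℕ, ∀ m ≥ m₀, 0 < ν m y)
(H : G → G → ℝ)
    (hH : ∀ x y : G, Tendsto (fun m : ℕ => ν m (x⁻¹ * y) / ν m y) atTop (𝓝 (H x y)))
    (hHpos : ∀ x y : G, 0 < H x y)
    (c C : G → ℝ) (hc : ∀ x : G, 0 < c x)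
    (hcH : ∀ x y : G, c x ≤ H x y) (hHC : ∀ x y : G, H x y ≤ C x)
    (φ : G → ℕ) (hφ : Function.Bijective φ) :
    (∀ y z : G, Summable fun x : G => |H x y - H x z| / (C x * 2 ^ φ x)) ∧
    (∀ y z : G,
      (∑' x : G, |H x y - H x z| / (C x * 2 ^ φ x)) =
        ∑' x : G, |H x z - H x y| / (C x * 2 ^ φ x)) ∧
    (∀ y z w : G,
      (∑' x : G, |H x y - H x w| / (C x * 2 ^ φ x)) ≤
        (∑' x : G, |H x y - H x z| / (C x * 2 ^ φ x)) +
          ∑' x : G, |H x z - H x w| / (C x * 2 ^ φ x)) ∧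
    (∀ y z : G,
      (∑' x : G, |H x y - H x z| / (C x * 2 ^ φ x)) = 0 ↔
        y⁻¹ * z ∈ ratioLimitRadical H) := by
  have hCpos : ∀ x : G, 0 < C x := fun x => lt_of_lt_of_le (hHpos x 1) (hHC x 1)
  have hden : ∀ x : G, 0 < C x * 2 ^ φ x := fun x =>
    mul_pos (hCpos x) (pow_pos two_pos _)
  -- summability
  have hsum : ∀ y z : G, Summable fun x : G => |H x y - H x z| / (C x * 2 ^ φ x) := by
    intro y z
    have hs : Summable fun x : G => (1 / 2 : ℝ) ^ φ x := by
      have : Summable fun n : ℕ => (1 / 2 : ℝ) ^ n :=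
        summable_geometric_of_lt_one (by norm_num) (by norm_num)
      exact (Equiv.ofBijective φ hφ).summable_iff.mpr this
    refine Summable.of_nonneg_of_le (fun x => div_nonneg (abs_nonneg _) (hden x).le) (fun x => ?_) hs
    have hb : |H x y - H x z| ≤ C x := by
      rw [abs_le]
      constructor
      · nlinarith [hHpos x y, hHC x z]
      · nlinarith [hHpos x z, hHC x y]
    calc |H x y - H x z| / (C x * 2 ^ φ x)
        ≤ C x / (C x * 2 ^ φ x) := (div_le_div_iff_of_pos_right (hden x)).mpr hb
      _ = (1 / 2 : ℝ) ^ φ x := by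
          rw [div_pow, one_pow]
          rw [div_eq_div_iff (hden x).ne' (pow_pos (by norm_num : (0:ℝ) < 2) (φ x)).ne']
          ring
  -- H 1 y = 1
  have hone : ∀ y : G, H 1 y = 1 := by
    intro y
    obtain ⟨m₀, hm₀⟩ := hev y
    refine tendsto_nhds_unique (hH 1 y) ?_
    refine Tendsto.congr' ?_ tendsto_const_nhds
    filter_upwards [eventually_ge_atTop m₀] with m hm
    simp [div_self (ne_of_gt (hm₀ m hm))]
  -- cocycle identity
  have hco : ∀ x w y : G, H (x * w) y = H w (x⁻¹ * y) * H x y := by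
    intro x w y
    obtain ⟨m₀, hm₀⟩ := hev (x⁻¹ * y)
    refine tendsto_nhds_unique (hH (x * w) y) ?_
    have key : Tendsto
        (fun m : ℕ => (ν m (w⁻¹ * (x⁻¹ * y)) / ν m (x⁻¹ * y)) * (ν m (x⁻¹ * y) / ν m y))
        atTop (𝓝 (H w (x⁻¹ * y) * H x y)) := (hH w (x⁻¹ * y)).mul (hH x y)
    refine Tendsto.congr' ?_ key
    filter_upwards [eventually_ge_atTop m₀] with m hm
    have h1 : ν m (x⁻¹ * y) ≠ 0 := ne_of_gt (hm₀ m hm)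
    have : (x * w)⁻¹ * y = w⁻¹ * (x⁻¹ * y) := by group
    rw [this, div_mul_div_comm, mul_comm (ν m (w⁻¹ * (x⁻¹ * y))) (ν m (x⁻¹ * y)),
      mul_div_mul_left _ _ h1]
  -- key equivalence
  have hiff : ∀ y z : G, (∀ x : G, H x y = H x z) ↔ (∀ x : G, H x (y⁻¹ * z) = H x 1) := by
    intro y z
    constructor
    · intro h w
      have h1 : H (y * w) z = H w (y⁻¹ * z) * H y z := hco y w z
      have h2 : H (y * w) y = H w (y⁻¹ * y) * H y y := hco y w y
      rw [inv_mul_cancel] at h2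
      have h3 : H w (y⁻¹ * z) * H y z = H w 1 * H y y := by
        rw [← h1, ← h2, h (y * w)]
      have h4 : H y y = H y z := h y
      rw [← h4] at h3
      exact mul_right_cancel₀ (ne_of_gt (hHpos y y)) h3
    · intro h x
      have gen : ∀ a : G, H a z = H (y⁻¹ * a) 1 * H y z := by
        intro a
        have h1 : H (y * (y⁻¹ * a)) z = H (y⁻¹ * a) (y⁻¹ * z) * H y z := hco y (y⁻¹ * a) z
        rw [mul_inv_cancel_left, h (y⁻¹ * a)] at h1
        exact h1
      have gen2 : ∀ a : G, H a y = H (y⁻¹ * a) 1 * H y y := by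
        intro a
        have h1 : H (y * (y⁻¹ * a)) y = H (y⁻¹ * a) (y⁻¹ * y) * H y y := hco y (y⁻¹ * a) y
        rw [mul_inv_cancel_left, inv_mul_cancel] at h1
        exact h1
      have e1 : (1 : ℝ) = H (y⁻¹ * 1) 1 * H y z := by rw [← gen 1, hone]
      have e2 : (1 : ℝ) = H (y⁻¹ * 1) 1 * H y y := by rw [← gen2 1, hone]
      have e3 : H y z = H y y :=
        mul_left_cancel₀ (ne_of_gt (hHpos (y⁻¹ * 1) 1)) (e1.symm.trans e2)
      rw [gen x, gen2 x, e3]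
  refine ⟨hsum, ?_, ?_, ?_⟩
  · intro y z
    congr 1
    funext x
    rw [abs_sub_comm]
  · intro y z w
    rw [← Summable.tsum_add (hsum y z) (hsum z w)]
    refine Summable.tsum_le_tsum (fun x => ?_) (hsum y w) ((hsum y z).add (hsum z w))
    rw [← add_div]
    exact (div_le_div_iff_of_pos_right (hden x)).mpr (abs_sub_le _ _ _)
  · intro y z
    have hz : (∑' x : G, |H x y - H x z| / (C x * 2 ^ φ x)) = 0 ↔
        ∀ x : G, |H x y - H x z| / (C x * 2 ^ φ x) = 0 := by
      constructor
      · intro h0 x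
        by_contra hne
        have hx0 : 0 < |H x y - H x z| / (C x * 2 ^ φ x) :=
          lt_of_le_of_ne (div_nonneg (abs_nonneg _) (hden x).le) (Ne.symm hne)
        have hle : |H x y - H x z| / (C x * 2 ^ φ x) ≤
            ∑' x : G, |H x y - H x z| / (C x * 2 ^ φ x) :=
          Summable.le_tsum (hsum y z) x (fun b _ => div_nonneg (abs_nonneg _) (hden b).le)
        linarith
      · intro h
        rw [tsum_congr h, tsum_zero]
    rw [hz]
    have : (∀ x : G, |H x y - H x z| / (C x * 2 ^ φ x) = 0) ↔ ∀ x : G, H x y = H x z := by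
      constructor
      · intro h x
        have := h x
        rw [div_eq_zero_iff] at this
        rcases this with h' | h'
        · have := abs_eq_zero.mp h'
          linarith
        · exact absurd h' (ne_of_gt (hden x))
      · intro h x
        rw [h x]
        simp
    rw [this]
    exact hiff y z
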